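/- Let X = {ab, ba} and let s ∈ X⁺ with |s| ≥ 4. If u and v are words such that u·s·v ∈ X⁺ and |u| is odd, then u·s·v contains an overlap (i.e., a factor of the form xwxwx with x a letter and w a possibly empty word). -/

import Mathlib

/-- Alphabet: `false` = a, `true` = b. The Thue–Morse morphism μ(a)=ab, μ(b)=ba. -/
def mu (w : List Bool) : List Bool := w.flatMap (fun x => [x, !x])

/-- The Thue–Morse word: `tm n` is the parity of the binary digit sum of `n`. -/
def tm (n : ℕ) : Bool := (Nat.digits 2 n).sum % 2 == 1

/-- `w` is a (finite) factor/segment of the Thue–Morse word. -/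
def IsFactorTM (w : List Bool) : Prop :=
  ∃ i : ℕ, w = (List.range w.length).map (fun k => tm (i + k))

/-- Apply the endomorphism of {a,b}⁺ determined by a ↦ fa, b ↦ fb to a word. -/
def subst (fa fb : List Bool) (w : List Bool) : List Bool :=
  w.flatMap (fun x => if x then fb else fa)

/-- `s` is a nonempty concatenation of the blocks ab and ba. -/
def IsXWord (s : List Bool) : Prop :=
  ∃ l : List (List Bool), l ≠ [] ∧ (∀ x ∈ l, x = [false, true] ∨ x = [true, false]) ∧
    s = l.flatten

/-- `s` contains an overlap, i.e. a factor of the form xwxwx with x a letter. -/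
def HasOverlap (s : List Bool) : Prop :=
  ∃ (x : Bool) (w p q : List Bool), s = p ++ ([x] ++ w ++ [x] ++ w ++ [x]) ++ q

lemma pair_flatten (l : List (List Bool))
    (hl : ∀ x ∈ l, x = [false, true] ∨ x = [true, false]) (k : ℕ) :
    l.flatten[2*k+1]? = (l.flatten[2*k]?).map (fun a => !a) := by
  induction l generalizing k with
  | nil => simp
  | cons h t ih =>
    have hh := hl h List.mem_cons_self
    have ht : ∀ x ∈ t, x = [false,true] ∨ x = [true,false] :=
      fun x hx => hl x (List.mem_cons_of_mem _ hx)
    rcases hh with h1 | h1 <;> subst h1 <;>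
    · cases k with
      | zero => simp
      | succ k =>
        have e1 : 2*(k+1)+1 = (2*k+1) + 1 + 1 := by ring
        have e2 : 2*(k+1) = (2*k) + 1 + 1 := by ring
        rw [e1, e2]
        simp only [List.flatten_cons, List.cons_append, List.nil_append,
          List.getElem?_cons_succ]
        exact ih ht k

lemma drop_cons_of_getElem? {l : List Bool} {n : ℕ} {a : Bool}
    (h : l[n]? = some a) : l.drop n = a :: l.drop (n+1) := by
  obtain ⟨hn, ha⟩ := List.getElem?_eq_some_iff.1 h
  rw [List.drop_eq_getElem_cons hn, ha]

/-- Synchronization lemma of de Luca and Varricchio. -/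
theorem luca_varricchio (s u v : List Bool) (hs : IsXWord s) (hl : 4 ≤ s.length)
    (husv : IsXWord (u ++ s ++ v)) (hu : Odd u.length) :
    HasOverlap (u ++ s ++ v) := by
  obtain ⟨ls, -, hls, hseq⟩ := hs
  obtain ⟨lt, -, hlt, hteq⟩ := husv
  obtain ⟨j, hj⟩ := hu
  set t := u ++ s ++ v with ht
  have ps : ∀ k, s[2*k+1]? = (s[2*k]?).map (fun a => !a) := by
    intro k; rw [hseq]; exact pair_flatten ls hls k
  have pt : ∀ k, t[2*k+1]? = (t[2*k]?).map (fun a => !a) := by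
    intro k; rw [hteq]; exact pair_flatten lt hlt k
  have hts : ∀ i, i < s.length → t[u.length + i]? = s[i]? := by
    intro i hi
    rw [ht, List.append_assoc, List.getElem?_append_right (by omega),
      Nat.add_sub_cancel_left, List.getElem?_append]
    simp [hi]
  have h2j : 2*j < t.length := by
    have h5 : u.length ≤ t.length := by rw [ht]; simp
    omega
  set a : Bool := t[2*j]'h2j with ha
  have h0 : t[2*j]? = some a := List.getElem?_eq_getElem h2j
  have h1 : t[2*j+1]? = some (!a) := by rw [pt j, h0]; rfl
  have hs0 : s[0]? = some (!a) := by
    have h := hts 0 (by omega)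
    rw [Nat.add_zero, hj] at h
    rw [← h, h1]
  have hs1 : s[1]? = some a := by
    have h := ps 0
    rw [Nat.mul_zero, Nat.zero_add, hs0] at h
    simpa using h
  have h2 : t[2*j+1+1]? = some a := by
    have h := hts 1 (by omega)
    rw [hj] at h
    rw [h]; exact hs1
  have h3 : t[2*j+1+1+1]? = some (!a) := by
    have h := pt (j+1)
    rw [show 2*(j+1)+1 = 2*j+1+1+1 by ring, show 2*(j+1) = 2*j+1+1 by ring, h2] at h
    simpa using h
  have hs2 : s[2]? = some (!a) := by
    have h := hts 2 (by omega)
    rw [hj, show 2*j+1+2 = 2*j+1+1+1 by ring] at h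
    rw [← h, h3]
  have hs3 : s[3]? = some a := by
    have h := ps 1
    rw [show 2*1+1 = 3 by norm_num, show 2*1 = 2 by norm_num, hs2] at h
    simpa using h
  have h4 : t[2*j+1+1+1+1]? = some a := by
    have h := hts 3 (by omega)
    rw [hj, show 2*j+1+3 = 2*j+1+1+1+1 by ring] at h
    rw [h]; exact hs3
  have hdrop : t.drop (2*j) =
      a :: (!a) :: a :: (!a) :: a :: t.drop (2*j+1+1+1+1+1) := by
    rw [drop_cons_of_getElem? h0, drop_cons_of_getElem? h1,
      drop_cons_of_getElem? h2, drop_cons_of_getElem? h3,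
      drop_cons_of_getElem? h4]
  refine ⟨a, [!a], t.take (2*j), t.drop (2*j+1+1+1+1+1), ?_⟩
  calc t = t.take (2*j) ++ t.drop (2*j) := (List.take_append_drop _ _).symm
    _ = t.take (2*j) ++ (a :: (!a) :: a :: (!a) :: a :: t.drop (2*j+1+1+1+1+1)) := by
        rw [hdrop]
    _ = t.take (2*j) ++ ([a] ++ [!a] ++ [a] ++ [!a] ++ [a]) ++ t.drop (2*j+1+1+1+1+1) := by
        simp
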